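/- Asynchronous composition of composable MIOs is well-defined: if S and T are composable MIOs, with o_S = out_S ∩ in_T and o_T = out_T ∩ in_S, then Ω_{o_S}(S) and Ω_{o_T}(T) are composable, so S ⊗_as T = Ω_{o_S}(S) ⊗_sy Ω_{o_T}(T) is a well-defined MIO. -/

import Mathlib

/-- A modal I/O-transition system (MIO): states, an initial state, a signature of
input, output and internal actions (pairwise disjoint subsets of the action
universe `A`), may-transitions and must-transitions with must ⊆ may. -/
structure MIO (A : Type) where
  State : Type
  start : State
  inp : Set A
  out : Set A
  intl : Set A
  may : State → A → State → Prop
  must : State → A → State → Prop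
  inp_out : ∀ a, a ∈ inp → a ∈ out → False
  inp_intl : ∀ a, a ∈ inp → a ∈ intl → False
  out_intl : ∀ a, a ∈ out → a ∈ intl → False
  must_sub : ∀ s a s', must s a s' → may s a s'

namespace MIO

variable {A B : Type}

/-- The set of all actions of a MIO. -/
def act (S : MIO A) : Set A := S.inp ∪ S.out ∪ S.intl

/-- Two MIOs have the same signature. -/
def SigEq (S T : MIO A) : Prop := S.inp = T.inp ∧ S.out = T.out ∧ S.intl = T.intl

/-- Strong modal refinement `S ≤_m T`. -/
def StrongRefines (S T : MIO A) : Prop :=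
  SigEq S T ∧
  ∃ R : S.State → T.State → Prop, R S.start T.start ∧
    ∀ s t, R s t →
      (∀ a t', T.must t a t' → ∃ s', S.must s a s' ∧ R s' t') ∧
      (∀ a s', S.may s a s' → ∃ t', T.may t a t' ∧ R s' t')

/-- One internal must-transition. -/
def tauMust (S : MIO A) (s s' : S.State) : Prop := ∃ a ∈ S.intl, S.must s a s'

/-- Finitely many (possibly zero) internal must-transitions. -/
def tauMustStar (S : MIO A) : S.State → S.State → Prop := Relation.ReflTransGen S.tauMust

/-- One internal may-transition. -/
def tauMay (S : MIO A) (s s' : S.State) : Prop := ∃ a ∈ S.intl, S.may s a s'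

/-- Finitely many (possibly zero) internal may-transitions. -/
def tauMayStar (S : MIO A) : S.State → S.State → Prop := Relation.ReflTransGen S.tauMay

/-- Weak modal refinement `S ≤_m* T`. -/
def WeakRefines (S T : MIO A) : Prop :=
  SigEq S T ∧
  ∃ R : S.State → T.State → Prop, R S.start T.start ∧
    ∀ s t, R s t →
      (∀ a ∈ T.inp ∪ T.out, ∀ t', T.must t a t' →
        ∃ s1 s2 s', S.tauMustStar s s1 ∧ S.must s1 a s2 ∧ S.tauMustStar s2 s' ∧ R s' t') ∧
      (∀ a ∈ T.intl, ∀ t', T.must t a t' → ∃ s', S.tauMustStar s s' ∧ R s' t') ∧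
      (∀ a ∈ S.inp ∪ S.out, ∀ s', S.may s a s' →
        ∃ t1 t2 t', T.tauMayStar t t1 ∧ T.may t1 a t2 ∧ T.tauMayStar t2 t' ∧ R s' t') ∧
      (∀ a ∈ S.intl, ∀ s', S.may s a s' → ∃ t', T.tauMayStar t t' ∧ R s' t')

/-- Shared actions of two MIOs. -/
def shared (S T : MIO A) : Set A := S.act ∩ T.act

/-- Two MIOs are (syntactically) composable if their actions overlap only on
complementary types. -/
def Composable (S T : MIO A) : Prop :=
  shared S T ⊆ (S.inp ∩ T.out) ∪ (T.inp ∩ S.out)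

/-- Synchronous composition `S ⊗_sy T` of composable MIOs. -/
def syncComp (S T : MIO A) (_h : Composable S T) : MIO A where
  State := S.State × T.State
  start := (S.start, T.start)
  inp := (S.inp ∪ T.inp) \ shared S T
  out := (S.out ∪ T.out) \ shared S T
  intl := S.intl ∪ T.intl ∪ shared S T
  may p a p' :=
    (a ∈ shared S T ∧ S.may p.1 a p'.1 ∧ T.may p.2 a p'.2) ∨
    (a ∈ S.act ∧ a ∉ shared S T ∧ S.may p.1 a p'.1 ∧ p'.2 = p.2) ∨
    (a ∈ T.act ∧ a ∉ shared S T ∧ T.may p.2 a p'.2 ∧ p'.1 = p.1)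
  must p a p' :=
    (a ∈ shared S T ∧ S.must p.1 a p'.1 ∧ T.must p.2 a p'.2) ∨
    (a ∈ S.act ∧ a ∉ shared S T ∧ S.must p.1 a p'.1 ∧ p'.2 = p.2) ∨
    (a ∈ T.act ∧ a ∉ shared S T ∧ T.must p.2 a p'.2 ∧ p'.1 = p.1)
  inp_out := by
    intro a ha hb
    have h1 := S.inp_out a; have h2 := T.inp_out a
    simp only [Set.mem_diff, Set.mem_union, shared, act, Set.mem_inter_iff] at ha hb
    tauto
  inp_intl := by
    intro a ha hb
    have h1 := S.inp_intl a; have h2 := T.inp_intl a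
    simp only [Set.mem_diff, Set.mem_union, shared, act, Set.mem_inter_iff] at ha hb
    tauto
  out_intl := by
    intro a ha hb
    have h1 := S.out_intl a; have h2 := T.out_intl a
    simp only [Set.mem_diff, Set.mem_union, shared, act, Set.mem_inter_iff] at ha hb
    tauto
  must_sub := by
    rintro p a p' (⟨h1, h2, h3⟩ | ⟨h1, h2, h3, h4⟩ | ⟨h1, h2, h3, h4⟩)
    · exact Or.inl ⟨h1, S.must_sub _ _ _ h2, T.must_sub _ _ _ h3⟩
    · exact Or.inr (Or.inl ⟨h1, h2, S.must_sub _ _ _ h3, h4⟩)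
    · exact Or.inr (Or.inr ⟨h1, h2, T.must_sub _ _ _ h3, h4⟩)

/-- Reachability (w.r.t. may-transitions) from the initial state. -/
def Reachable (M : MIO A) (s : M.State) : Prop :=
  Relation.ReflTransGen (fun x y => ∃ a, M.may x a y) M.start s

/-- Strong modal compatibility `S ⇄_sc T`. -/
def StrongCompat (S T : MIO A) : Prop :=
  ∃ h : Composable S T,
    ∀ p : S.State × T.State, (syncComp S T h).Reachable p →
      (∀ a ∈ S.out ∩ T.inp, ∀ s', S.may p.1 a s' → ∃ t', T.must p.2 a t') ∧
      (∀ a ∈ T.out ∩ S.inp, ∀ t', T.may p.2 a t' → ∃ s', S.must p.1 a s')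

/-- Weak modal compatibility `S ⇄_wc T`. -/
def WeakCompat (S T : MIO A) : Prop :=
  ∃ h : Composable S T,
    ∀ p : S.State × T.State, (syncComp S T h).Reachable p →
      (∀ a ∈ S.out ∩ T.inp, ∀ s', S.may p.1 a s' →
        ∃ t1 t', T.tauMustStar p.2 t1 ∧ T.must t1 a t') ∧
      (∀ a ∈ T.out ∩ S.inp, ∀ t', T.may p.2 a t' →
        ∃ s1 s', S.tauMustStar p.1 s1 ∧ S.must s1 a s')

/-- Finite executions: `Trace M s as s'` means `M` can go from `s` to `s'` by
a sequence of may-transitions labelled by the list of actions `as`. -/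
inductive Trace (M : MIO A) : M.State → List A → M.State → Prop
  | nil (s : M.State) : Trace M s [] s
  | cons {s s' s'' : M.State} {a : A} {as : List A} :
      M.may s a s' → Trace M s' as s'' → Trace M s (a :: as) s''

/-- Renaming the actions of a MIO along an injective function. -/
def rename (f : A → B) (hf : Function.Injective f) (S : MIO A) : MIO B where
  State := S.State
  start := S.start
  inp := f '' S.inp
  out := f '' S.out
  intl := f '' S.intl
  may s b s' := ∃ a, b = f a ∧ S.may s a s'
  must s b s' := ∃ a, b = f a ∧ S.must s a s'
  inp_out := by
    rintro b ⟨a1, h1, rfl⟩ ⟨a2, h2, heq⟩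
    obtain rfl := hf heq
    exact S.inp_out a2 h1 h2
  inp_intl := by
    rintro b ⟨a1, h1, rfl⟩ ⟨a2, h2, heq⟩
    obtain rfl := hf heq
    exact S.inp_intl a2 h1 h2
  out_intl := by
    rintro b ⟨a1, h1, rfl⟩ ⟨a2, h2, heq⟩
    obtain rfl := hf heq
    exact S.out_intl a2 h1 h2
  must_sub := by
    rintro s b s' ⟨a, rfl, h⟩
    exact ⟨a, rfl, S.must_sub _ _ _ h⟩

-- Tagging function: actions in `o` become the fresh "queue input" actions `n^▷`
-- (encoded as `Sum.inr n`), all other actions are kept (as `Sum.inl a`).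
open Classical in
noncomputable def tagged (o : Set A) : A → A ⊕ A :=
  fun a => if a ∈ o then Sum.inr a else Sum.inl a

theorem tagged_injective (o : Set A) : Function.Injective (tagged o) := by
  classical
  intro a b h
  by_cases ha : a ∈ o <;> by_cases hb : b ∈ o <;>
    simp [tagged, ha, hb] at h <;> tauto

/-- The queue MIO `Q_o`: a FIFO buffer for messages in `o`. States are finite
strings over `A` (with reachable states being strings over `o`), inputs are the
tagged actions `n^▷ = Sum.inr n`, outputs the actions `n = Sum.inl n` for `n ∈ o`.
Enqueue at the front, dequeue from the back; may- and must-transitions coincide. -/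
def queueMIO (o : Set A) : MIO (A ⊕ A) where
  State := List A
  start := []
  inp := Sum.inr '' o
  out := Sum.inl '' o
  intl := ∅
  may s b s' :=
    (∃ n ∈ o, b = Sum.inr n ∧ s' = n :: s) ∨ (∃ n ∈ o, b = Sum.inl n ∧ s = s' ++ [n])
  must s b s' :=
    (∃ n ∈ o, b = Sum.inr n ∧ s' = n :: s) ∨ (∃ n ∈ o, b = Sum.inl n ∧ s = s' ++ [n])
  inp_out := by rintro b ⟨n, hn, rfl⟩ ⟨m, hm, h⟩; simp at h
  inp_intl := by rintro b _ h; simp at h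
  out_intl := by rintro b _ h; simp at h
  must_sub := fun _ _ _ h => h

theorem omega_composable (o : Set A) (S : MIO A) (ho : o ⊆ S.out) :
    Composable (rename (tagged o) (tagged_injective o) S) (queueMIO o) := by
  classical
  rintro b ⟨hb1, hb2⟩
  have hq : (∃ n ∈ o, Sum.inr n = b) ∨ (∃ n ∈ o, Sum.inl n = b) := by
    simpa [queueMIO, act, Set.image, Set.mem_union] using hb2
  have hr : ∃ a, ((a ∈ S.inp ∨ a ∈ S.out) ∨ a ∈ S.intl) ∧ tagged o a = b := by
    simpa [rename, act, ← Set.image_union] using hb1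
  obtain ⟨a, _, ha⟩ := hr
  rcases hq with ⟨n, hn, hb⟩ | ⟨n, hn, hb⟩
  · right
    constructor
    · exact ⟨n, hn, hb⟩
    · refine ⟨n, ho hn, ?_⟩
      rw [← hb]; simp [tagged, hn]
  · exfalso
    rw [← hb] at ha
    by_cases h : a ∈ o
    · simp [tagged, h] at ha
    · simp [tagged, h] at ha
      exact h (ha ▸ hn)

/-- `Ω_o(S)`: the MIO `S` with an output queue for `o ⊆ out_S`, i.e. the
synchronous product of the renamed MIO `S_o^▷` with the queue MIO `Q_o`. -/
noncomputable def Omega (o : Set A) (S : MIO A) (ho : o ⊆ S.out) : MIO (A ⊕ A) :=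
  syncComp (rename (tagged o) (tagged_injective o) S) (queueMIO o) (omega_composable o S ho)

/-- The outputs of `S` that are inputs of `T`. -/
def oOf (S T : MIO A) : Set A := S.out ∩ T.inp

/-- `Ω_{o_S}(S)` where `o_S = out_S ∩ in_T`. -/
noncomputable def OmegaC (S T : MIO A) : MIO (A ⊕ A) :=
  Omega (oOf S T) S Set.inter_subset_left

/-- Composability of the queue-extended MIOs, i.e. definedness of `S ⊗_as T`. -/
def AsyncComposable (S T : MIO A) : Prop := Composable (OmegaC S T) (OmegaC T S)

/-- Asynchronous composition `S ⊗_as T = Ω_{o_S}(S) ⊗_sy Ω_{o_T}(T)`. -/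
noncomputable def asyncComp (S T : MIO A) (h : AsyncComposable S T) : MIO (A ⊕ A) :=
  syncComp (OmegaC S T) (OmegaC T S) h

/-- Asynchronous modal compatibility `S ⇄_ac T`. -/
def AsyncCompat (S T : MIO A) : Prop :=
  Composable S T ∧ WeakCompat (OmegaC S T) (OmegaC T S)


lemma tagged_eq_inl {o : Set A} {a n : A} (h : tagged o a = Sum.inl n) :
    a = n ∧ a ∉ o := by
  classical
  by_cases ha : a ∈ o
  · simp [tagged, ha] at h
  · simp [tagged, ha] at h; exact ⟨h, ha⟩

lemma act_rename (f : A → B) (hf : Function.Injective f) (S : MIO A) :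
    (rename f hf S).act = f '' S.act := by
  simp [rename, act, Set.image_union]

lemma act_queue (o : Set A) :
    (queueMIO o).act = Sum.inr '' o ∪ Sum.inl '' o := by
  simp [queueMIO, act]

lemma mem_act_out {S : MIO A} {a : A} (ha : a ∈ S.out) : a ∈ S.act :=
  Set.mem_union_left _ (Set.mem_union_right _ ha)

lemma shared_rename_queue (o : Set A) (S : MIO A) (ho : o ⊆ S.out) :
    shared (rename (tagged o) (tagged_injective o) S) (queueMIO o) = Sum.inr '' o := by
  ext b
  constructor
  · rintro ⟨hb1, hb2⟩
    rw [act_rename, Set.mem_image] at hb1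
    rw [act_queue] at hb2
    rcases hb2 with ⟨n, hn, rfl⟩ | ⟨n, hn, rfl⟩
    · exact ⟨n, hn, rfl⟩
    · exfalso
      obtain ⟨a, _, ha⟩ := hb1
      obtain ⟨rfl, hno⟩ := tagged_eq_inl ha
      exact hno hn
  · rintro ⟨n, hn, rfl⟩
    refine ⟨?_, ?_⟩
    · rw [act_rename, Set.mem_image]
      exact ⟨n, mem_act_out (ho hn), by simp [tagged, hn]⟩
    · rw [act_queue]
      exact Or.inl ⟨n, hn, rfl⟩

lemma inp_Omega (o : Set A) (S : MIO A) (ho : o ⊆ S.out) :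
    (Omega o S ho).inp = Sum.inl '' S.inp := by
  have h1 : (Omega o S ho).inp =
      ((rename (tagged o) (tagged_injective o) S).inp ∪ (queueMIO o).inp) \
        shared (rename (tagged o) (tagged_injective o) S) (queueMIO o) := rfl
  rw [h1, shared_rename_queue o S ho]
  show (tagged o '' S.inp ∪ Sum.inr '' o) \ Sum.inr '' o = Sum.inl '' S.inp
  have himg : tagged o '' S.inp = Sum.inl '' S.inp := by
    apply Set.image_congr
    intro a ha
    have hno : a ∉ o := fun hh => S.inp_out a ha (ho hh)
    simp [tagged, hno]
  rw [himg]
  ext b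
  simp only [Set.mem_diff, Set.mem_union, Set.mem_image]
  constructor
  · rintro ⟨⟨a, ha, rfl⟩ | hb, hnot⟩
    · exact ⟨a, ha, rfl⟩
    · exact absurd hb hnot
  · rintro ⟨a, ha, rfl⟩
    exact ⟨Or.inl ⟨a, ha, rfl⟩, by rintro ⟨n, _, hne⟩; simp at hne⟩

lemma out_Omega (o : Set A) (S : MIO A) (ho : o ⊆ S.out) :
    (Omega o S ho).out = Sum.inl '' S.out := by
  classical
  have h1 : (Omega o S ho).out =
      ((rename (tagged o) (tagged_injective o) S).out ∪ (queueMIO o).out) \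
        shared (rename (tagged o) (tagged_injective o) S) (queueMIO o) := rfl
  rw [h1, shared_rename_queue o S ho]
  show (tagged o '' S.out ∪ Sum.inl '' o) \ Sum.inr '' o = Sum.inl '' S.out
  ext b
  simp only [Set.mem_diff, Set.mem_union, Set.mem_image]
  constructor
  · rintro ⟨⟨a, ha, rfl⟩ | ⟨n, hn, rfl⟩, hnot⟩
    · by_cases hao : a ∈ o
      · exact absurd ⟨a, hao, by simp [tagged, hao]⟩ hnot
      · exact ⟨a, ha, by simp [tagged, hao]⟩
    · exact ⟨n, ho hn, rfl⟩
  · rintro ⟨a, ha, rfl⟩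
    refine ⟨?_, by rintro ⟨n, _, hne⟩; simp at hne⟩
    by_cases hao : a ∈ o
    · exact Or.inr ⟨a, hao, rfl⟩
    · exact Or.inl ⟨a, ha, by simp [tagged, hao]⟩

lemma intl_Omega (o : Set A) (S : MIO A) (ho : o ⊆ S.out) :
    (Omega o S ho).intl = Sum.inl '' S.intl ∪ Sum.inr '' o := by
  have h1 : (Omega o S ho).intl =
      (rename (tagged o) (tagged_injective o) S).intl ∪ (queueMIO o).intl ∪
        shared (rename (tagged o) (tagged_injective o) S) (queueMIO o) := rfl
  rw [h1, shared_rename_queue o S ho]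
  show tagged o '' S.intl ∪ ∅ ∪ Sum.inr '' o = Sum.inl '' S.intl ∪ Sum.inr '' o
  have himg : tagged o '' S.intl = Sum.inl '' S.intl := by
    apply Set.image_congr
    intro a ha
    have hno : a ∉ o := fun hh => S.out_intl a (ho hh) ha
    simp [tagged, hno]
  rw [himg, Set.union_empty]

lemma act_Omega (o : Set A) (S : MIO A) (ho : o ⊆ S.out) :
    (Omega o S ho).act = Sum.inl '' S.act ∪ Sum.inr '' o := by
  rw [act, inp_Omega, out_Omega, intl_Omega, act, Set.image_union, Set.image_union]
  ext b
  simp only [Set.mem_union]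
  tauto

end MIO

open MIO

/-- Asynchronous composition of composable MIOs is well-defined: for composable
`S`, `T` the queue-extended MIOs `Ω_{o_S}(S)` and `Ω_{o_T}(T)` are composable,
so `S ⊗_as T = Ω_{o_S}(S) ⊗_sy Ω_{o_T}(T)` is a well-defined MIO. -/
theorem asyncComp_defined (A : Type) (S T : MIO A) (h : Composable S T) :
    AsyncComposable S T := by
  rintro b ⟨hb1, hb2⟩
  rw [show (OmegaC S T).act = _ from act_Omega _ _ _] at hb1
  rw [show (OmegaC T S).act = _ from act_Omega _ _ _] at hb2
  simp only [OmegaC, act_Omega, Set.mem_union, Set.mem_image] at hb1 hb2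
  rcases hb1 with ⟨a, ha, rfl⟩ | ⟨n, hn, rfl⟩
  · rcases hb2 with ⟨a', ha', he⟩ | ⟨n, hn, he⟩
    · have hea : a' = a := Sum.inl.inj he
      rw [hea] at ha'
      rw [show (OmegaC S T).inp = _ from inp_Omega _ _ _,
        show (OmegaC S T).out = _ from out_Omega _ _ _,
        show (OmegaC T S).inp = _ from inp_Omega _ _ _,
        show (OmegaC T S).out = _ from out_Omega _ _ _]
      simp only [OmegaC, inp_Omega, out_Omega, Set.mem_union, Set.mem_inter_iff,
        Set.mem_image]
      rcases h ⟨ha, ha'⟩ with ⟨h1, h2⟩ | ⟨h1, h2⟩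
      · exact Or.inl ⟨⟨a, h1, rfl⟩, ⟨a, h2, rfl⟩⟩
      · exact Or.inr ⟨⟨a, h1, rfl⟩, ⟨a, h2, rfl⟩⟩
    · simp at he
  · rcases hb2 with ⟨a', _, he⟩ | ⟨m, hm, he⟩
    · simp at he
    · have hem : m = n := Sum.inr.inj he
      rw [hem] at hm
      exact absurd hn.1 (fun h1 => S.inp_out n hm.2 h1)
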